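/- (Convergence of inexact gradient descent with bounded estimation error.) Let F : EuclideanSpace ℝ (Fin n) → ℝ be differentiable with gradient Lipschitz with constant L > 0 and bounded below by F* ∈ ℝ. Let 0 < η < 1/(2L), δ ≥ 0, T ≥ 1 a natural number, and let the sequences w, g : ℕ → EuclideanSpace ℝ (Fin n) satisfy, for every t < T, w(t+1) = w(t) − η·g(t) and ‖g(t) − ∇F(w(t))‖ ≤ δ. Then (1/T)·Σ_{t=0}^{T−1} ‖∇F(w(t))‖² ≤ 2·(F(w(0)) − F*)/(η·(1 − 2Lη)·T) + ((1 + 2Lη)/(1 − 2Lη))·δ². -/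

import Mathlib

open RealInnerProductSpace intervalIntegral

/-- Descent lemma: for `F` with `L`-Lipschitz gradient,
`F (x + v) ≤ F x + ⟪∇F x, v⟫ + L/2 ‖v‖²`. -/
lemma descent_lemma {n : ℕ} (F : EuclideanSpace ℝ (Fin n) → ℝ)
    (hF : Differentiable ℝ F) (L : ℝ) (hL : 0 ≤ L)
    (hlip : LipschitzWith L.toNNReal (fun w => gradient F w))
    (x v : EuclideanSpace ℝ (Fin n)) :
    F (x + v) ≤ F x + ⟪gradient F x, v⟫ + L / 2 * ‖v‖ ^ 2 := by
  have hgradcont : Continuous (fun w => gradient F w) := hlip.continuous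
  have hd : ∀ t : ℝ, HasDerivAt (fun s : ℝ => F (x + s • v))
      ⟪gradient F (x + t • v), v⟫ t := by
    intro t
    have h1 : HasFDerivAt F ((InnerProductSpace.toDual ℝ _) (gradient F (x + t • v)))
        (x + t • v) := by
      have := (hF (x + t • v)).hasGradientAt
      rwa [hasGradientAt_iff_hasFDerivAt] at this
    have h2 : HasDerivAt (fun s : ℝ => x + s • v) v t := by
      simpa using ((hasDerivAt_id t).smul_const v).const_add x
    exact (h1.comp_hasDerivAt t h2).congr_deriv (by rw [InnerProductSpace.toDual_apply_apply])
  have hcont : Continuous (fun t : ℝ => ⟪gradient F (x + t • v), v⟫) := by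
    exact (hgradcont.comp (by continuity)).inner continuous_const
  have hint : ∀ a b : ℝ, IntervalIntegrable (fun t : ℝ => ⟪gradient F (x + t • v), v⟫)
      MeasureTheory.volume a b := fun a b => hcont.intervalIntegrable a b
  have key : F (x + v) - F x = ∫ t in (0:ℝ)..1, ⟪gradient F (x + t • v), v⟫ := by
    rw [intervalIntegral.integral_eq_sub_of_hasDerivAt (fun t _ => hd t) (hint 0 1)]
    simp
  have hb : ∀ t ∈ Set.Icc (0:ℝ) 1,
      ⟪gradient F (x + t • v), v⟫ ≤ ⟪gradient F x, v⟫ + L * t * ‖v‖ ^ 2 := by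
    intro t ht
    have h1 : ⟪gradient F (x + t • v), v⟫ - ⟪gradient F x, v⟫
        = ⟪gradient F (x + t • v) - gradient F x, v⟫ := by rw [inner_sub_left]
    have h2 : ⟪gradient F (x + t • v) - gradient F x, v⟫
        ≤ ‖gradient F (x + t • v) - gradient F x‖ * ‖v‖ := real_inner_le_norm _ _
    have h3 : ‖gradient F (x + t • v) - gradient F x‖ ≤ L * ‖t • v‖ := by
      have := hlip.dist_le_mul (x + t • v) x
      simpa [dist_eq_norm, Real.coe_toNNReal _ hL] using this
    have h4 : ‖t • v‖ = t * ‖v‖ := by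
      rw [norm_smul, Real.norm_eq_abs, abs_of_nonneg ht.1]
    rw [h4] at h3
    have h5 := mul_le_mul_of_nonneg_right h3 (norm_nonneg v)
    nlinarith [h5]
  have hmono : (∫ t in (0:ℝ)..1, ⟪gradient F (x + t • v), v⟫)
      ≤ ∫ t in (0:ℝ)..1, (⟪gradient F x, v⟫ + L * t * ‖v‖ ^ 2) := by
    have hc2 : Continuous (fun t : ℝ => ⟪gradient F x, v⟫ + L * t * ‖v‖ ^ 2) :=
      continuous_const.add ((continuous_const.mul continuous_id).mul continuous_const)
    exact intervalIntegral.integral_mono_on (by norm_num) (hint 0 1)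
      (hc2.intervalIntegrable 0 1) hb
  have hval : (∫ t in (0:ℝ)..1, (⟪gradient F x, v⟫ + L * t * ‖v‖ ^ 2))
      = ⟪gradient F x, v⟫ + L / 2 * ‖v‖ ^ 2 := by
    have hc3 : Continuous (fun t : ℝ => L * t * ‖v‖ ^ 2) :=
      (continuous_const.mul continuous_id).mul continuous_const
    rw [intervalIntegral.integral_add (intervalIntegrable_const)
      (hc3.intervalIntegrable 0 1)]
    simp only [intervalIntegral.integral_const, smul_eq_mul]
    have : (∫ t in (0:ℝ)..1, L * t * ‖v‖ ^ 2)
        = L * ‖v‖ ^ 2 * ∫ t in (0:ℝ)..1, t := by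
      rw [← intervalIntegral.integral_const_mul]
      congr 1; ext t; ring
    rw [this, integral_id]; ring
  linarith [key ▸ hmono.trans_eq hval]


set_option maxHeartbeats 1000000 in
/-- Convergence of inexact gradient descent with bounded estimation error:
with step `0 < η < 1/(2L)` and per-round gradient error at most `δ`, the
average squared gradient norm converges to a `δ²`-neighborhood of a critical
point. -/
theorem inexact_gradient_descent_convergence
    (n : ℕ) (F : EuclideanSpace ℝ (Fin n) → ℝ)
    (hF : Differentiable ℝ F)
    (L : ℝ) (hL : 0 < L)
    (hlip : LipschitzWith L.toNNReal (fun w => gradient F w))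
    (Fstar : ℝ) (hbound : ∀ w, Fstar ≤ F w)
    (η δ : ℝ) (hη₀ : 0 < η) (hη₁ : η < 1 / (2 * L)) (hδ : 0 ≤ δ)
    (T : ℕ) (hT : 1 ≤ T)
    (w g : ℕ → EuclideanSpace ℝ (Fin n))
    (hstep : ∀ t < T, w (t + 1) = w t - η • g t)
    (herr : ∀ t < T, ‖g t - gradient F (w t)‖ ≤ δ) :
    (1 / (T : ℝ)) * ∑ t ∈ Finset.range T, ‖gradient F (w t)‖ ^ 2 ≤
      2 * (F (w 0) - Fstar) / (η * (1 - 2 * L * η) * T)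
        + ((1 + 2 * L * η) / (1 - 2 * L * η)) * δ ^ 2 := by
  have h2L : 0 < 1 - 2 * L * η := by
    have h := (lt_div_iff₀ (by positivity : (0:ℝ) < 2 * L)).mp hη₁
    nlinarith
  -- per-step descent
  have step : ∀ t < T, F (w (t + 1)) ≤ F (w t)
      - η * (1 - 2 * L * η) / 2 * ‖gradient F (w t)‖ ^ 2
      + η * (1 + 2 * L * η) / 2 * δ ^ 2 := by
    intro t ht
    have hw : w (t + 1) = w t + (-η) • g t := by
      rw [hstep t ht]; module
    have hdes := descent_lemma F hF L hL.le hlip (w t) ((-η) • g t)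
    rw [← hw] at hdes
    set G := gradient F (w t) with hG
    set e := g t - G with he
    have hge : g t = G + e := by rw [he]; abel
    have hinner : ⟪G, (-η) • g t⟫ = -η * (‖G‖ ^ 2 + ⟪G, e⟫) := by
      rw [inner_smul_right, hge, inner_add_right, real_inner_self_eq_norm_sq]
    have hie : ⟪G, e⟫ ≥ -(‖G‖ * δ) := by
      have h1 := real_inner_le_norm G (-e)
      have h2 : ‖(-e : EuclideanSpace ℝ (Fin n))‖ = ‖e‖ := norm_neg e
      have h3 : ‖e‖ ≤ δ := herr t ht
      have h4 : ⟪G, -e⟫ = -⟪G, e⟫ := inner_neg_right G e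
      nlinarith [norm_nonneg G, norm_nonneg e]
    have hnorm2 : ‖(-η) • g t‖ ^ 2 = η ^ 2 * ‖g t‖ ^ 2 := by
      rw [norm_smul]; simp [abs_of_pos hη₀]; ring
    have hg_le : ‖g t‖ ≤ ‖G‖ + δ := by
      calc ‖g t‖ = ‖G + e‖ := by rw [hge]
        _ ≤ ‖G‖ + ‖e‖ := norm_add_le _ _
        _ ≤ ‖G‖ + δ := by linarith [herr t ht]
    have hg_sq : ‖g t‖ ^ 2 ≤ (‖G‖ + δ) ^ 2 := by
      nlinarith [norm_nonneg (g t), norm_nonneg G]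
    rw [hinner, hnorm2] at hdes
    have hgs := mul_le_mul_of_nonneg_left hg_sq
      (show (0:ℝ) ≤ L / 2 * η ^ 2 by positivity)
    nlinarith [hie, mul_nonneg hη₀.le (sq_nonneg (‖G‖ - δ)),
      mul_nonneg (mul_nonneg hL.le (sq_nonneg η)) (sq_nonneg (‖G‖ - δ))]
  -- telescoping
  have tel : ∀ k ≤ T, F (w k) + η * (1 - 2 * L * η) / 2 *
      ∑ t ∈ Finset.range k, ‖gradient F (w t)‖ ^ 2
      ≤ F (w 0) + k * (η * (1 + 2 * L * η) / 2 * δ ^ 2) := by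
    intro k hk
    induction k with
    | zero => simp
    | succ m ih =>
      have hm : m < T := hk
      have ihm := ih (Nat.le_of_succ_le hk)
      rw [Finset.sum_range_succ]
      have hs := step m hm
      push_cast
      linarith [hs, ihm]
  have telT := tel T le_rfl
  have hFT := hbound (w T)
  set S := ∑ t ∈ Finset.range T, ‖gradient F (w t)‖ ^ 2 with hS
  have hTpos : (0 : ℝ) < T := by exact_mod_cast hT
  have hc : 0 < η * (1 - 2 * L * η) / 2 := by positivity
  have hSb : η * (1 - 2 * L * η) / 2 * S ≤ (F (w 0) - Fstar)
      + T * (η * (1 + 2 * L * η) / 2 * δ ^ 2) := by linarith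
  have h2 : S ≤ (F (w 0) - Fstar + T * (η * (1 + 2 * L * η) / 2 * δ ^ 2))
      / (η * (1 - 2 * L * η) / 2) := (le_div_iff₀ hc).mpr (by linarith)
  have hηne : (η : ℝ) ≠ 0 := ne_of_gt hη₀
  have h2Lne : (1 - 2 * L * η : ℝ) ≠ 0 := ne_of_gt h2L
  have hTne : (T : ℝ) ≠ 0 := ne_of_gt hTpos
  calc 1 / (T : ℝ) * S
      ≤ 1 / (T : ℝ) * ((F (w 0) - Fstar + T * (η * (1 + 2 * L * η) / 2 * δ ^ 2))
        / (η * (1 - 2 * L * η) / 2)) := by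
        apply mul_le_mul_of_nonneg_left h2 (by positivity)
    _ = 2 * (F (w 0) - Fstar) / (η * (1 - 2 * L * η) * T)
        + ((1 + 2 * L * η) / (1 - 2 * L * η)) * δ ^ 2 := by
        field_simp
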